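/- arXiv:2512.00788 — 2 statements merged into one kernel-verified Lean document; each statement's English description precedes it below -/
import Mathlib

section
/- (Vanishing of far off-diagonal transition matrix elements for commuting Hamiltonians.) Let ι be a finite type, let h : ι → Matrix n n ℂ be a family of pairwise commuting Hermitian matrices, set H = ∑_a h a, and let A be a matrix such that Commute A (h a) for all a outside a subset T ⊆ ι, with R = ∑_{a ∈ T} ‖h a‖. If (μ, u) and (ν, v) are eigenpairs of H with real eigenvalues satisfying μ - ν > 2 * R, then star u ⬝ᵥ (A.mulVec v) = 0. Equivalently, the transition matrix element of A between the eigenspace of H with energy at least E' and the eigenspace with energy at most E vanishes whenever E' - E > 2R. -/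
open scoped Matrix.Norms.L2Operator
open scoped Matrix

open NormedSpace in
private lemma exp_mulVec_eigen' {n : Type*} [Fintype n] [DecidableEq n]
    (M : Matrix n n ℂ) (c : ℂ) (u : n → ℂ) (h : M.mulVec u = c • u) :
    (exp M).mulVec u = Complex.exp c • u := by
  have hpow : ∀ k : ℕ, (M ^ k).mulVec u = c ^ k • u := by
    intro k
    induction k with
    | zero => simp
    | succ k ih =>
      rw [pow_succ, ← Matrix.mulVec_mulVec, h, Matrix.mulVec_smul, ih, smul_smul, pow_succ]
      ring_nf
  let φ : Matrix n n ℂ →ₗ[ℂ] (n → ℂ) :=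
    { toFun := fun M => M.mulVec u
      map_add' := fun M N => Matrix.add_mulVec M N u
      map_smul' := fun c M => Matrix.smul_mulVec c M u }
  let ψ : Matrix n n ℂ →L[ℂ] (n → ℂ) := ⟨φ, LinearMap.continuous_of_finiteDimensional φ⟩
  have h1 : (exp M).mulVec u = ψ (exp M) := rfl
  rw [h1, exp_eq_tsum ℂ, ContinuousLinearMap.map_tsum ψ (expSeries_summable' M)]
  have h2 : ∀ k : ℕ, ψ ((((k.factorial : ℂ))⁻¹) • M ^ k) = ((((k.factorial : ℂ))⁻¹) * c ^ k) • u := by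
    intro k
    show (((k.factorial : ℂ))⁻¹ • M ^ k).mulVec u = _
    rw [Matrix.smul_mulVec, hpow, smul_smul]
  simp only [h2]
  rw [Summable.tsum_smul_const]
  · congr 1
    rw [Complex.exp_eq_exp_ℂ, exp_eq_tsum ℂ]
    simp [smul_eq_mul]
  · simpa [smul_eq_mul] using expSeries_summable' (𝕂 := ℂ) c

private lemma norm_exp_le' {𝔸 : Type*} [NormedRing 𝔸] [NormOneClass 𝔸] [NormedAlgebra ℂ 𝔸]
    [CompleteSpace 𝔸] (x : 𝔸) : ‖NormedSpace.exp x‖ ≤ Real.exp ‖x‖ := by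
  rw [NormedSpace.exp_eq_tsum ℂ]
  refine (norm_tsum_le_tsum_norm (NormedSpace.norm_expSeries_summable' x)).trans ?_
  rw [Real.exp_eq_exp_ℝ, NormedSpace.exp_eq_tsum_div]
  refine Summable.tsum_le_tsum ?_ (NormedSpace.norm_expSeries_summable' x)
    (Real.summable_pow_div_factorial ‖x‖)
  intro k
  rw [norm_smul]
  have h1 : ‖((k.factorial : ℂ))⁻¹‖ = (((k.factorial : ℝ)))⁻¹ := by
    rw [norm_inv, Complex.norm_natCast]
  rw [h1, div_eq_inv_mul]
  exact mul_le_mul_of_nonneg_left (norm_pow_le x k) (by positivity)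

/-- Lemma 1 of the paper: vanishing of far off-diagonal transition
matrix elements for commuting Hamiltonians. For a pairwise commuting family of
Hermitian matrices `h` with sum `H`, and an operator `A` commuting with all terms
outside `T` (`R = ∑_{a ∈ T} ‖h a‖`), the transition matrix element of `A` between
eigenpairs `(μ, u)` and `(ν, v)` of `H` vanishes whenever `μ - ν > 2R`. -/
theorem transition_element_vanishes
    {n : Type*} [Fintype n] [DecidableEq n] [Nonempty n]
    {ι : Type*} [Fintype ι]
    (h : ι → Matrix n n ℂ)
    (hherm : ∀ a, (h a).IsHermitian)
    (hcomm : ∀ a b, Commute (h a) (h b))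
    (H : Matrix n n ℂ) (hH : H = ∑ a, h a)
    (A : Matrix n n ℂ) (T : Finset ι)
    (hA : ∀ a ∉ T, Commute A (h a))
    (R : ℝ) (hR : R = ∑ a ∈ T, ‖h a‖)
    (μ ν : ℝ) (u v : n → ℂ)
    (hu : H.mulVec u = (μ : ℂ) • u) (hv : H.mulVec v = (ν : ℂ) • v)
    (hgap : μ - ν > 2 * R) :
    star u ⬝ᵥ A.mulVec v = 0 := by
  classical
  haveI : NormOneClass (Matrix n n ℂ) := ⟨CStarRing.norm_one⟩
  set HT : Matrix n n ℂ := ∑ a ∈ T, h a with hHT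
  set HC : Matrix n n ℂ := ∑ a ∈ Tᶜ, h a with hHC
  have hsplit : H = HT + HC := by
    rw [hH, hHT, hHC, Finset.sum_add_sum_compl]
  have hTC : Commute HT HC :=
    Commute.sum_left _ _ _ fun a _ => Commute.sum_right _ _ _ fun b _ => hcomm a b
  have hAC : Commute A HC :=
    Commute.sum_right _ _ _ fun a ha => hA a (by simpa using ha)
  have hHTherm : HTᴴ = HT := by
    rw [hHT, Matrix.conjTranspose_sum]
    exact Finset.sum_congr rfl fun a _ => (hherm a)
  have hHherm : Hᴴ = H := by
    rw [hH, Matrix.conjTranspose_sum]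
    exact Finset.sum_congr rfl fun a _ => (hherm a)
  have hHTnorm : ‖HT‖ ≤ R := hR ▸ norm_sum_le _ _
  set val := star u ⬝ᵥ A *ᵥ v with hval
  set δ := μ - ν - 2 * R with hδdef
  have hδ : 0 < δ := by rw [hδdef]; linarith
  set eu : (n → ℂ) → EuclideanSpace ℂ n := fun w => (WithLp.equiv 2 (n → ℂ)).symm w with heu
  set K := ‖eu u‖ * (‖A‖ * ‖eu v‖) with hK
  have cs : ∀ (M : Matrix n n ℂ), ‖star u ⬝ᵥ M *ᵥ v‖ ≤ ‖eu u‖ * (‖M‖ * ‖eu v‖) := by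
    intro M
    have h1 : star u ⬝ᵥ M *ᵥ v = inner (𝕜 := ℂ) (eu u) (eu (M *ᵥ v)) :=
      by rw [dotProduct_comm]; exact (EuclideanSpace.inner_toLp_toLp u (M *ᵥ v)).symm
    rw [h1]
    refine (norm_inner_le_norm _ _).trans ?_
    refine mul_le_mul_of_nonneg_left ?_ (norm_nonneg _)
    exact M.l2_opNorm_mulVec (eu v)
  have bound : ∀ t : ℝ, 0 ≤ t → ‖val‖ ≤ K * Real.exp (-(t * δ)) := by
    intro t ht
    set tc : ℂ := (t : ℂ) with htc
    have htcstar : star tc = tc := by rw [htc, Complex.star_def, Complex.conj_ofReal]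
    -- eigenvector equations
    have hu' : (tc • H).mulVec u = (((t * μ : ℝ)) : ℂ) • u := by
      rw [Matrix.smul_mulVec, hu, smul_smul]
      push_cast
      rw [htc]
    have hv' : (-(tc • H)).mulVec v = (((-(t * ν) : ℝ)) : ℂ) • v := by
      rw [Matrix.neg_mulVec, Matrix.smul_mulVec, hv, smul_smul]
      rw [← neg_smul]
      push_cast
      rw [htc]
    have hEu := exp_mulVec_eigen' (tc • H) _ u hu'
    have hEv := exp_mulVec_eigen' (-(tc • H)) _ v hv'
    rw [← Complex.ofReal_exp] at hEu hEv
    set E := NormedSpace.exp (tc • H) with hE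
    set E' := NormedSpace.exp (-(tc • H)) with hE'
    set X := NormedSpace.exp (tc • HT) with hX
    set X' := NormedSpace.exp (-(tc • HT)) with hX'
    set Y := NormedSpace.exp (tc • HC) with hY
    set Y' := NormedSpace.exp (-(tc • HC)) with hY'
    have hct : Eᴴ = E := by
      rw [hE, ← Matrix.exp_conjTranspose]
      congr 1
      rw [Matrix.conjTranspose_smul, hHherm, htcstar]
    have hcomm1 : Commute (tc • HT) (tc • HC) := (hTC.smul_left tc).smul_right tc
    have hsum : tc • H = tc • HT + tc • HC := by rw [hsplit, smul_add]
    have hEsplit : E = X * Y := by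
      rw [hE, hX, hY, hsum, Matrix.exp_add_of_commute _ _ hcomm1]
    have hEsplit' : E' = Y' * X' := by
      rw [hE', hY', hX', hsum, neg_add, add_comm,
        Matrix.exp_add_of_commute _ _ (hcomm1.symm.neg_left.neg_right)]
    have hYY' : Y * Y' = 1 := by
      rw [hY, hY', ← Matrix.exp_add_of_commute _ _ ((Commute.refl (tc • HC)).neg_right),
        add_neg_cancel, NormedSpace.exp_zero]
    have hAY : Commute A Y := (hAC.smul_right tc).exp_right
    have hBB : E * A * E' = X * A * X' := by
      rw [hEsplit, hEsplit']
      have hYA : Y * A * Y' = A := by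
        rw [← hAY.eq, mul_assoc, hYY', mul_one]
      calc X * Y * A * (Y' * X') = X * (Y * A * Y') * X' := by
            simp only [mul_assoc]
        _ = X * A * X' := by rw [hYA]
    -- the transition identity
    have left : ∀ w : n → ℂ, star u ⬝ᵥ E *ᵥ w
        = ((Real.exp (t * μ) : ℝ) : ℂ) * (star u ⬝ᵥ w) := by
      intro w
      rw [Matrix.dotProduct_mulVec]
      have h2 : star u ᵥ* E = ((Real.exp (t * μ) : ℝ) : ℂ) • star u := by
        have h3 := Matrix.star_mulVec (M := E) (v := u)
        rw [hct] at h3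
        rw [← h3, hEu, star_smul]
        congr 1
        rw [Complex.star_def, Complex.conj_ofReal]
      rw [h2, smul_dotProduct, smul_eq_mul]
    have key : star u ⬝ᵥ (X * A * X') *ᵥ v
        = ((Real.exp (t * μ) : ℝ) : ℂ) * (((Real.exp (-(t * ν)) : ℝ) : ℂ) * val) := by
      rw [← hBB, ← Matrix.mulVec_mulVec, ← Matrix.mulVec_mulVec, hEv,
        Matrix.mulVec_smul, Matrix.mulVec_smul, dotProduct_smul, left, hval,
        smul_eq_mul]
      ring
    -- norms
    have hXn : ‖X‖ ≤ Real.exp (t * R) := by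
      refine (norm_exp_le' _).trans (Real.exp_le_exp.2 ?_)
      rw [norm_smul, htc, Complex.norm_real, Real.norm_eq_abs, abs_of_nonneg ht]
      exact mul_le_mul_of_nonneg_left hHTnorm ht
    have hX'n : ‖X'‖ ≤ Real.exp (t * R) := by
      refine (norm_exp_le' _).trans (Real.exp_le_exp.2 ?_)
      rw [norm_neg, norm_smul, htc, Complex.norm_real, Real.norm_eq_abs, abs_of_nonneg ht]
      exact mul_le_mul_of_nonneg_left hHTnorm ht
    have hBn : ‖X * A * X'‖ ≤ Real.exp (t * R) * ‖A‖ * Real.exp (t * R) := by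
      refine (Matrix.l2_opNorm_mul _ _).trans ?_
      have h4 : ‖X * A‖ ≤ Real.exp (t * R) * ‖A‖ :=
        (Matrix.l2_opNorm_mul _ _).trans
          (mul_le_mul_of_nonneg_right hXn (norm_nonneg _))
      exact mul_le_mul h4 hX'n (norm_nonneg _) (by positivity)
    have lhs_eq : Real.exp (t * μ) * Real.exp (-(t * ν)) * ‖val‖
        = ‖star u ⬝ᵥ (X * A * X') *ᵥ v‖ := by
      rw [key, norm_mul, norm_mul, Complex.norm_real, Complex.norm_real, Real.norm_eq_abs, Real.norm_eq_abs,
        abs_of_pos (Real.exp_pos _), abs_of_pos (Real.exp_pos _), mul_assoc]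
    have h5 : Real.exp (t * μ) * Real.exp (-(t * ν)) * ‖val‖
        ≤ Real.exp (t * R) * ‖A‖ * Real.exp (t * R) * (‖eu u‖ * ‖eu v‖) := by
      rw [lhs_eq]
      refine (cs _).trans ?_
      calc ‖eu u‖ * (‖X * A * X'‖ * ‖eu v‖)
          ≤ ‖eu u‖ * ((Real.exp (t * R) * ‖A‖ * Real.exp (t * R)) * ‖eu v‖) := by
            refine mul_le_mul_of_nonneg_left
              (mul_le_mul_of_nonneg_right hBn (norm_nonneg _)) (norm_nonneg _)
        _ = Real.exp (t * R) * ‖A‖ * Real.exp (t * R) * (‖eu u‖ * ‖eu v‖) := by ring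
    -- conclude
    rw [← Real.exp_add] at h5
    have h6 : ‖val‖ ≤ Real.exp (-(t * μ + -(t * ν)))
        * (Real.exp (t * μ + -(t * ν)) * ‖val‖) := by
      rw [← mul_assoc, ← Real.exp_add, neg_add_cancel, Real.exp_zero, one_mul]
    calc ‖val‖ ≤ Real.exp (-(t * μ + -(t * ν))) * (Real.exp (t * μ + -(t * ν)) * ‖val‖) := h6
      _ ≤ Real.exp (-(t * μ + -(t * ν)))
          * (Real.exp (t * R) * ‖A‖ * Real.exp (t * R) * (‖eu u‖ * ‖eu v‖)) := by
          refine mul_le_mul_of_nonneg_left ?_ (Real.exp_pos _).le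
          calc Real.exp (t * μ + -(t * ν)) * ‖val‖ ≤ _ := h5
            _ = Real.exp (t * R) * ‖A‖ * Real.exp (t * R) * (‖eu u‖ * ‖eu v‖) := rfl
      _ ≤ K * Real.exp (-(t * δ)) := by
          rw [hK]
          have : Real.exp (-(t * μ + -(t * ν)))
              * (Real.exp (t * R) * ‖A‖ * Real.exp (t * R) * (‖eu u‖ * ‖eu v‖))
              = (‖eu u‖ * (‖A‖ * ‖eu v‖)) *
                (Real.exp (-(t * μ + -(t * ν))) * Real.exp (t * R) * Real.exp (t * R)) := by
            ring
          rw [this]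
          refine mul_le_mul_of_nonneg_left ?_ (by positivity)
          rw [← Real.exp_add, ← Real.exp_add]
          apply le_of_eq
          congr 1
          rw [hδdef]
          ring
  -- take the limit t → ∞
  have htend : Filter.Tendsto (fun t : ℝ => K * Real.exp (-(t * δ))) Filter.atTop (nhds 0) := by
    have h1 : Filter.Tendsto (fun t : ℝ => -(t * δ)) Filter.atTop Filter.atBot := by
      apply Filter.tendsto_neg_atBot_iff.mpr
      exact Filter.Tendsto.atTop_mul_const hδ Filter.tendsto_id
    have h2 := Real.tendsto_exp_atBot.comp h1
    simpa using h2.const_mul K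
  have hle : ‖val‖ ≤ 0 := by
    refine ge_of_tendsto htend ?_
    filter_upwards [Filter.eventually_ge_atTop 0] with t ht
    exact bound t ht
  have : val = 0 := norm_le_zero_iff.mp hle
  exact this
end

section
/- Fix N ≥ 3 and let H_B and H_C be the MCS battery and charger Hamiltonians on N+1 qubits. Then ‖⁅H_B, H_C⁆ - (2 * Complex.I) • (σz^{(0)} * (∑_{i=1}^N σx^{(i)})^2)‖ ≤ 8 * N. In other words, the commutator equals its collective central-spin term up to a remainder of operator norm O(N), so the ‖⁅H_B,H_C⁆‖ is 2N² + O(N). -/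
open scoped Matrix.Norms.L2Operator
open scoped Matrix

/-- The 2×2 matrix `P` acting on site `j` of a chain of `N+1` qubits
(identity elsewhere): `P⁽ʲ⁾ f g = P (f j) (g j) * ∏_{k ≠ j} δ_{f k, g k}`. -/
def siteOp {N : ℕ} (P : Matrix (Fin 2) (Fin 2) ℂ) (j : Fin (N + 1)) :
    Matrix (Fin (N + 1) → Fin 2) (Fin (N + 1) → Fin 2) ℂ :=
  fun f g => P (f j) (g j) * ∏ k ∈ Finset.univ.erase j, (if f k = g k then (1 : ℂ) else 0)

/-- Pauli X. -/
def σx : Matrix (Fin 2) (Fin 2) ℂ := !![0, 1; 1, 0]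
/-- Pauli Y. -/
def σy : Matrix (Fin 2) (Fin 2) ℂ := !![0, -Complex.I; Complex.I, 0]
/-- Pauli Z. -/
def σz : Matrix (Fin 2) (Fin 2) ℂ := !![1, 0; 0, -1]

/-- The peripheral site labelled `i+1` (site `0` is the central spin). -/
def per {N : ℕ} (i : Fin N) : Fin (N + 1) := i.succ

/-- The cyclic successor `i ⊕ 1` among the peripheral sites `{1, …, N}`. -/
def perS {N : ℕ} (i : Fin N) : Fin (N + 1) :=
  ⟨(i.1 + 1) % N + 1, Nat.succ_lt_succ (Nat.mod_lt _ i.pos)⟩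
/-- The cyclic predecessor `i ⊖ 1` among the peripheral sites `{1, …, N}`. -/
def perP {N : ℕ} (i : Fin N) : Fin (N + 1) :=
  ⟨(i.1 + (N - 1)) % N + 1, Nat.succ_lt_succ (Nat.mod_lt _ i.pos)⟩

/-- The modified central-spin (MCS) battery Hamiltonian
`H_B = ∑_{i=1}^N σx⁽⁰⁾ σx⁽ⁱ⁾ + ∑_{i=1}^N σz⁽ⁱ⁾ σz⁽ⁱ⊕¹⁾` on `N+1` qubits (PBC). -/
noncomputable def HB (N : ℕ) :
    Matrix (Fin (N + 1) → Fin 2) (Fin (N + 1) → Fin 2) ℂ :=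
  (∑ i : Fin N, siteOp σx 0 * siteOp σx (per i)) +
  (∑ i : Fin N, siteOp σz (per i) * siteOp σz (perS i))

/-- The modified central-spin (MCS) charger Hamiltonian
`H_C = ∑_{i=1}^N σy⁽⁰⁾ σx⁽ⁱ⁾ + ∑_{i=1}^N σz⁽ⁱ⁾ σz⁽ⁱ⊕¹⁾` on `N+1` qubits (PBC). -/
noncomputable def HC (N : ℕ) :
    Matrix (Fin (N + 1) → Fin 2) (Fin (N + 1) → Fin 2) ℂ :=
  (∑ i : Fin N, siteOp σy 0 * siteOp σx (per i)) +
  (∑ i : Fin N, siteOp σz (per i) * siteOp σz (perS i))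

/-! ### Auxiliary lemmas -/

section Aux

variable {N : ℕ}

/-- Abbreviation for the operator space. -/
abbrev MCSOp (N : ℕ) := Matrix (Fin (N + 1) → Fin 2) (Fin (N + 1) → Fin 2) ℂ

lemma siteOp_apply (P : Matrix (Fin 2) (Fin 2) ℂ) (j : Fin (N+1)) (f g : Fin (N+1) → Fin 2) :
    siteOp P j f g
      = P (f j) (g j) * (if ∀ k ∈ Finset.univ.erase j, f k = g k then (1:ℂ) else 0) := by
  rw [siteOp, Finset.prod_boole]
  congr 1
  rw [Subsingleton.elim (Finset.decidableDforallFinset) (inferInstance)]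

lemma siteOp_mul_same (P Q : Matrix (Fin 2) (Fin 2) ℂ) (j : Fin (N + 1)) :
    siteOp P j * siteOp Q j = siteOp (P * Q) j := by
  ext f g
  rw [Matrix.mul_apply]
  have key : ∀ h : Fin (N+1) → Fin 2,
      siteOp P j f h * siteOp Q j h g
        = ∑ a : Fin 2, (if h = Function.update f j a
            then P (f j) a * Q a (g j) *
              (if ∀ k ∈ Finset.univ.erase j, f k = g k then (1:ℂ) else 0) else 0) := by
    intro h
    rw [siteOp_apply, siteOp_apply]
    by_cases hC1 : ∀ k ∈ Finset.univ.erase j, f k = h k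
    · have hiff : ∀ a : Fin 2, (h = Function.update f j a) ↔ a = h j := by
        intro a
        constructor
        · intro he; rw [he, Function.update_self]
        · intro ha; subst ha; funext k
          by_cases hk : k = j
          · subst hk; rw [Function.update_self]
          · rw [Function.update_of_ne hk]
            exact (hC1 k (Finset.mem_erase.2 ⟨hk, Finset.mem_univ k⟩)).symm
      simp only [hiff]
      rw [Fintype.sum_ite_eq' (h j) (fun a => P (f j) a * Q a (g j) *
        (if ∀ k ∈ Finset.univ.erase j, f k = g k then (1:ℂ) else 0))]
      have hiff2 : (∀ k ∈ Finset.univ.erase j, h k = g k) ↔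
          (∀ k ∈ Finset.univ.erase j, f k = g k) := by
        constructor <;> intro hh k hk
        · rw [hC1 k hk]; exact hh k hk
        · rw [← hC1 k hk]; exact hh k hk
      rw [if_pos hC1, if_congr hiff2 rfl rfl]
      ring
    · rw [if_neg hC1, mul_zero, zero_mul]
      refine (Finset.sum_eq_zero fun a _ => ?_).symm
      refine if_neg fun he => hC1 fun k hk => ?_
      rw [he, Function.update_of_ne (Finset.mem_erase.1 hk).1]
  rw [Finset.sum_congr rfl fun h _ => key h, Finset.sum_comm]
  rw [siteOp_apply, Matrix.mul_apply, Finset.sum_mul]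
  refine Finset.sum_congr rfl fun a _ => ?_
  rw [Fintype.sum_ite_eq' (Function.update f j a)
    (fun _ => P (f j) a * Q a (g j) * (if ∀ k ∈ Finset.univ.erase j, f k = g k then (1:ℂ) else 0))]

/-- Product of single-site operators on distinct sites. -/
lemma siteOp_mul_of_ne (P Q : Matrix (Fin 2) (Fin 2) ℂ) {j k : Fin (N + 1)} (hjk : j ≠ k) :
    siteOp P j * siteOp Q k = fun f g =>
      P (f j) (g j) * Q (f k) (g k) *
        (if ∀ m ∈ (Finset.univ.erase j).erase k, f m = g m then (1:ℂ) else 0) := by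
  ext f g
  rw [Matrix.mul_apply]
  rw [Finset.sum_eq_single_of_mem (Function.update f j (g j)) (Finset.mem_univ _)]
  · rw [siteOp_apply, siteOp_apply]
    have h1 : ∀ m ∈ Finset.univ.erase j, f m = Function.update f j (g j) m := by
      intro m hm; rw [Function.update_of_ne (Finset.mem_erase.1 hm).1]
    rw [if_pos h1, Function.update_self, Function.update_of_ne (Ne.symm hjk)]
    have h2 : (∀ m ∈ Finset.univ.erase k, Function.update f j (g j) m = g m) ↔
        (∀ m ∈ (Finset.univ.erase j).erase k, f m = g m) := by
      constructor
      · intro hh m hm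
        have hmk := Finset.mem_erase.1 hm
        have hmj := Finset.mem_erase.1 hmk.2
        have := hh m (Finset.mem_erase.2 ⟨hmk.1, Finset.mem_univ m⟩)
        rwa [Function.update_of_ne hmj.1] at this
      · intro hh m hm
        by_cases hmj : m = j
        · subst hmj; rw [Function.update_self]
        · rw [Function.update_of_ne hmj]
          exact hh m (Finset.mem_erase.2 ⟨(Finset.mem_erase.1 hm).1,
            Finset.mem_erase.2 ⟨hmj, Finset.mem_univ m⟩⟩)
    rw [if_congr h2 rfl rfl]
    ring
  · intro h _ hne
    rw [siteOp_apply, siteOp_apply]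
    by_cases hC1 : ∀ m ∈ Finset.univ.erase j, f m = h m
    · by_cases hC2 : ∀ m ∈ Finset.univ.erase k, h m = g m
      · exfalso; apply hne
        funext m
        by_cases hmj : m = j
        · rw [hmj, Function.update_self]
          exact hC2 j (Finset.mem_erase.2 ⟨hjk, Finset.mem_univ j⟩)
        · rw [Function.update_of_ne hmj]
          exact (hC1 m (Finset.mem_erase.2 ⟨hmj, Finset.mem_univ m⟩)).symm
      · rw [if_neg hC2, mul_zero, mul_zero]
    · rw [if_neg hC1, mul_zero, zero_mul]

lemma siteOp_commute (P Q : Matrix (Fin 2) (Fin 2) ℂ) {j k : Fin (N + 1)} (hjk : j ≠ k) :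
    Commute (siteOp P j) (siteOp Q k) := by
  unfold Commute SemiconjBy
  rw [siteOp_mul_of_ne P Q hjk, siteOp_mul_of_ne Q P (Ne.symm hjk)]
  funext f g
  rw [Finset.erase_right_comm]
  ring

lemma siteOp_one (j : Fin (N + 1)) : siteOp (1 : Matrix (Fin 2) (Fin 2) ℂ) j = 1 := by
  ext f g
  rw [siteOp_apply, Matrix.one_apply, Matrix.one_apply]
  by_cases h : f = g
  · subst h; simp
  · have : ¬ (f j = g j ∧ ∀ k ∈ Finset.univ.erase j, f k = g k) := by
      intro ⟨h1, h2⟩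
      apply h; funext k
      by_cases hk : k = j
      · subst hk; exact h1
      · exact h2 k (Finset.mem_erase.2 ⟨hk, Finset.mem_univ k⟩)
    by_cases h1 : f j = g j
    · rw [if_pos h1, one_mul, if_neg (fun h2 => this ⟨h1, h2⟩), if_neg h]
    · rw [if_neg h1, zero_mul, if_neg h]

lemma siteOp_conjTranspose (P : Matrix (Fin 2) (Fin 2) ℂ) (j : Fin (N + 1)) :
    (siteOp P j)ᴴ = siteOp Pᴴ j := by
  ext f g
  rw [Matrix.conjTranspose_apply, siteOp_apply, siteOp_apply, Matrix.conjTranspose_apply]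
  rw [star_mul']
  congr 1
  · rw [apply_ite star, star_one, star_zero]
    exact if_congr ⟨fun h k hk => (h k hk).symm, fun h k hk => (h k hk).symm⟩ rfl rfl

lemma siteOp_smul (c : ℂ) (P : Matrix (Fin 2) (Fin 2) ℂ) (j : Fin (N + 1)) :
    siteOp (c • P) j = c • siteOp P j := by
  ext f g
  simp only [siteOp, Matrix.smul_apply, smul_eq_mul]
  ring

lemma siteOp_sub (P Q : Matrix (Fin 2) (Fin 2) ℂ) (j : Fin (N + 1)) :
    siteOp (P - Q) j = siteOp P j - siteOp Q j := by
  ext f g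
  simp only [siteOp, Matrix.sub_apply]
  ring

lemma norm_one_op : ‖(1 : MCSOp N)‖ = 1 := by
  have h := Matrix.l2_opNorm_conjTranspose_mul_self (1 : MCSOp N)
  rw [Matrix.conjTranspose_one, one_mul] at h
  have hne : (1 : MCSOp N) ≠ 0 := by
    intro hc
    have := congrFun (congrFun hc (fun _ => 0)) (fun _ => 0)
    simp [Matrix.one_apply] at this
  have hpos : 0 < ‖(1 : MCSOp N)‖ := norm_pos_iff.2 hne
  nlinarith

lemma norm_siteOp_eq_one {P : Matrix (Fin 2) (Fin 2) ℂ} (hP : Pᴴ * P = 1) (j : Fin (N + 1)) :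
    ‖siteOp P j‖ = 1 := by
  have h1 : (siteOp P j)ᴴ * siteOp P j = 1 := by
    rw [siteOp_conjTranspose, siteOp_mul_same, hP, siteOp_one]
  have h := Matrix.l2_opNorm_conjTranspose_mul_self (siteOp P j)
  rw [h1, norm_one_op] at h
  nlinarith [norm_nonneg (siteOp P j)]

lemma hx_unit : σxᴴ * σx = 1 := by
  ext i j
  fin_cases i <;> fin_cases j <;>
    simp [σx, Matrix.mul_apply, Fin.sum_univ_two, Matrix.one_apply]

lemma hy_unit : σyᴴ * σy = 1 := by
  ext i j
  fin_cases i <;> fin_cases j <;>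
    simp [σy, Matrix.mul_apply, Fin.sum_univ_two, Matrix.one_apply, Complex.mul_conj]

lemma hz_unit : σzᴴ * σz = 1 := by
  ext i j
  fin_cases i <;> fin_cases j <;>
    simp [σz, Matrix.mul_apply, Fin.sum_univ_two, Matrix.one_apply]

lemma hxy_comm : σx * σy - σy * σx = (2 * Complex.I) • σz := by
  ext i j
  fin_cases i <;> fin_cases j <;>
    simp [σx, σy, σz, Matrix.mul_apply, Fin.sum_univ_two, Matrix.smul_apply] <;> ring

lemma per_ne_zero (i : Fin N) : per i ≠ 0 := Fin.succ_ne_zero i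

lemma perS_ne_zero (i : Fin N) : perS i ≠ 0 := by
  simp [perS, Fin.ext_iff]

lemma norm_pair_le {P Q : Matrix (Fin 2) (Fin 2) ℂ} (hP : Pᴴ * P = 1) (hQ : Qᴴ * Q = 1)
    (j k : Fin (N + 1)) : ‖siteOp P j * siteOp Q k‖ ≤ 1 := by
  calc ‖siteOp P j * siteOp Q k‖ ≤ ‖siteOp P j‖ * ‖siteOp Q k‖ := norm_mul_le _ _
  _ = 1 := by rw [norm_siteOp_eq_one hP, norm_siteOp_eq_one hQ, one_mul]

lemma norm_lie_le {A B : MCSOp N} (hA : ‖A‖ ≤ 1) (hB : ‖B‖ ≤ 1) : ‖⁅A, B⁆‖ ≤ 2 := by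
  rw [Ring.lie_def]
  have h1 : ‖A * B‖ ≤ ‖A‖ * ‖B‖ := norm_mul_le A B
  have h2 : ‖B * A‖ ≤ ‖B‖ * ‖A‖ := norm_mul_le B A
  have h3 : ‖A * B - B * A‖ ≤ ‖A * B‖ + ‖B * A‖ := norm_sub_le _ _
  have := norm_nonneg A; have := norm_nonneg B
  nlinarith

set_option maxHeartbeats 1000000 in
/-- The main term identity. -/
lemma mcs_main_term (P Q : Matrix (Fin 2) (Fin 2) ℂ) :
    ⁅∑ i : Fin N, siteOp P 0 * siteOp σx (per i),
     ∑ i : Fin N, siteOp Q 0 * siteOp σx (per i)⁆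
      = siteOp (P * Q - Q * P) 0 * (∑ i : Fin N, siteOp σx (per i)) ^ 2 := by
  set S : MCSOp N := ∑ i : Fin N, siteOp σx (per i) with hS
  have hA : ∑ i : Fin N, siteOp P 0 * siteOp σx (per i) = siteOp P 0 * S :=
    (Finset.mul_sum _ _ _).symm
  have hB : ∑ i : Fin N, siteOp Q 0 * siteOp σx (per i) = siteOp Q 0 * S :=
    (Finset.mul_sum _ _ _).symm
  have hcomm : ∀ R : Matrix (Fin 2) (Fin 2) ℂ, Commute S (siteOp R 0) := by
    intro R
    exact (Commute.sum_right _ _ _ fun i _ =>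
      siteOp_commute R σx (Ne.symm (per_ne_zero i))).symm
  rw [hA, hB, Ring.lie_def]
  rw [(hcomm Q).mul_mul_mul_comm (siteOp P 0) S]
  rw [(hcomm P).mul_mul_mul_comm (siteOp Q 0) S]
  rw [siteOp_mul_same, siteOp_mul_same, ← sub_mul, ← siteOp_sub, sq]

set_option maxHeartbeats 1000000 in
/-- Side bound: the commutator of a star part with the ZZ ring part has norm at most `4N`. -/
lemma mcs_side_bound (P : Matrix (Fin 2) (Fin 2) ℂ) (hP : Pᴴ * P = 1) (hN : 3 ≤ N) :
    ‖⁅∑ i : Fin N, siteOp P 0 * siteOp σx (per i),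
       ∑ j : Fin N, siteOp σz (per j) * siteOp σz (perS j)⁆‖ ≤ 4 * N := by
  set a : Fin N → MCSOp N := fun i => siteOp P 0 * siteOp σx (per i) with ha
  set d : Fin N → MCSOp N := fun j => siteOp σz (per j) * siteOp σz (perS j) with hd
  have expand : ⁅∑ i : Fin N, a i, ∑ j : Fin N, d j⁆ = ∑ j : Fin N, ⁅∑ i : Fin N, a i, d j⁆ := by
    rw [Ring.lie_def, Finset.mul_sum, Finset.sum_mul, ← Finset.sum_sub_distrib]
    exact Finset.sum_congr rfl fun j _ => (Ring.lie_def _ _).symm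
  rw [expand]
  have hbound : ∀ j : Fin N, ‖⁅∑ i : Fin N, a i, d j⁆‖ ≤ 4 := by
    intro j
    have hNpos : 0 < N := by omega
    set jS : Fin N := ⟨(j.1 + 1) % N, Nat.mod_lt _ hNpos⟩ with hjS
    have hperjS : per jS = perS j := by
      simp [per, perS, Fin.ext_iff, Fin.val_succ, hjS]
    have hne : j ≠ jS := by
      rw [Fin.ne_iff_vne]
      show j.1 ≠ (j.1 + 1) % N
      rcases Nat.lt_or_ge (j.1 + 1) N with h | h
      · rw [Nat.mod_eq_of_lt h]; omega
      · have : j.1 + 1 = N := by have := j.2; omega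
        rw [this, Nat.mod_self]; omega
    have expand2 : ⁅∑ i : Fin N, a i, d j⁆ = ∑ i : Fin N, ⁅a i, d j⁆ := by
      rw [Ring.lie_def, Finset.sum_mul, Finset.mul_sum, ← Finset.sum_sub_distrib]
      exact Finset.sum_congr rfl fun i _ => (Ring.lie_def _ _).symm
    have hvanish : ∀ i ∈ Finset.univ, i ∉ ({j, jS} : Finset (Fin N)) → ⁅a i, d j⁆ = 0 := by
      intro i _ hi
      simp only [Finset.mem_insert, Finset.mem_singleton, not_or] at hi
      have h1 : per i ≠ per j := fun h => hi.1 (Fin.succ_inj.1 h)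
      have h2 : per i ≠ perS j := fun h => hi.2 (by rw [← hperjS] at h; exact Fin.succ_inj.1 h)
      have hc : Commute (a i) (d j) := by
        have c1 : Commute (siteOp P 0) (siteOp σz (per j)) :=
          siteOp_commute _ _ (Ne.symm (per_ne_zero j))
        have c2 : Commute (siteOp P 0) (siteOp σz (perS j)) :=
          siteOp_commute _ _ (Ne.symm (perS_ne_zero j))
        have c3 : Commute (siteOp σx (per i)) (siteOp σz (per j)) := siteOp_commute _ _ h1
        have c4 : Commute (siteOp σx (per i)) (siteOp σz (perS j)) := siteOp_commute _ _ h2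
        exact (c1.mul_right c2).mul_left (c3.mul_right c4)
      rw [Ring.lie_def, hc.eq, sub_self]
    have collapse : ∑ i : Fin N, ⁅a i, d j⁆ = ⁅a j, d j⁆ + ⁅a jS, d j⁆ := by
      rw [← Finset.sum_subset (Finset.subset_univ ({j, jS} : Finset (Fin N))) hvanish,
        Finset.sum_pair hne]
    rw [expand2, collapse]
    have b1 : ‖⁅a j, d j⁆‖ ≤ 2 :=
      norm_lie_le (norm_pair_le hP hx_unit _ _) (norm_pair_le hz_unit hz_unit _ _)
    have b2 : ‖⁅a jS, d j⁆‖ ≤ 2 :=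
      norm_lie_le (norm_pair_le hP hx_unit _ _) (norm_pair_le hz_unit hz_unit _ _)
    calc ‖⁅a j, d j⁆ + ⁅a jS, d j⁆‖ ≤ ‖⁅a j, d j⁆‖ + ‖⁅a jS, d j⁆‖ := norm_add_le _ _
    _ ≤ 4 := by linarith
  calc ‖∑ j : Fin N, ⁅∑ i : Fin N, a i, d j⁆‖ ≤ ∑ j : Fin N, ‖⁅∑ i : Fin N, a i, d j⁆‖ :=
        norm_sum_le _ _
  _ ≤ ∑ _j : Fin N, (4 : ℝ) := Finset.sum_le_sum fun j _ => hbound j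
  _ = 4 * N := by simp [mul_comm]

end Aux

set_option maxHeartbeats 1000000 in
/-- The MCS commutator equals its collective central-spin term
up to a remainder of operator norm at most `8N`; hence
`‖⁅H_B, H_C⁆‖ = 2N² + O(N)`. -/
theorem mcs_commutator_remainder_bound (N : ℕ) (hN : 3 ≤ N) :
    ‖⁅HB N, HC N⁆
        - (2 * Complex.I) • (siteOp σz 0 * (∑ i : Fin N, siteOp σx (per i)) ^ 2)‖
      ≤ 8 * (N : ℝ) := by
  set A : MCSOp N := ∑ i : Fin N, siteOp σx 0 * siteOp σx (per i) with hA
  set B : MCSOp N := ∑ i : Fin N, siteOp σy 0 * siteOp σx (per i) with hB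
  set D : MCSOp N := ∑ i : Fin N, siteOp σz (per i) * siteOp σz (perS i) with hD
  have hmain : ⁅A, B⁆
      = (2 * Complex.I) • (siteOp σz 0 * (∑ i : Fin N, siteOp σx (per i)) ^ 2) := by
    rw [hA, hB, mcs_main_term, hxy_comm, siteOp_smul, smul_mul_assoc]
  have hHB : HB N = A + D := rfl
  have hHC : HC N = B + D := rfl
  have hsplit : ⁅HB N, HC N⁆ = ⁅A, B⁆ + ⁅A, D⁆ + (⁅D, B⁆ + ⁅D, D⁆) := by
    rw [hHB, hHC]; simp only [Ring.lie_def]; noncomm_ring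
  have hDD : ⁅D, D⁆ = (0 : MCSOp N) := by rw [Ring.lie_def, sub_self]
  have hrem : ⁅HB N, HC N⁆
      - (2 * Complex.I) • (siteOp σz 0 * (∑ i : Fin N, siteOp σx (per i)) ^ 2)
      = ⁅A, D⁆ + ⁅D, B⁆ := by
    rw [hsplit, hDD, ← hmain]
    abel
  rw [hrem]
  have bAD : ‖⁅A, D⁆‖ ≤ 4 * N := mcs_side_bound σx hx_unit hN
  have bBD : ‖⁅D, B⁆‖ ≤ 4 * N := by
    have : ⁅D, B⁆ = -⁅B, D⁆ := by rw [Ring.lie_def, Ring.lie_def, neg_sub]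
    rw [this, norm_neg]
    exact mcs_side_bound σy hy_unit hN
  calc ‖⁅A, D⁆ + ⁅D, B⁆‖ ≤ ‖⁅A, D⁆‖ + ‖⁅D, B⁆‖ := norm_add_le _ _
  _ ≤ 4 * N + 4 * N := add_le_add bAD bBD
  _ = 8 * (N : ℝ) := by ring
end
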